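/- Let A be a finite algebra and C = Clo(A). Then the relational structure ⟨A;C•⟩ is polymorphism-homogeneous if and only if ⟨A;C°⟩ is polymorphism-homogeneous and ⟨C•⟩_∄ = ⟨C°⟩_∄. -/

import Mathlib

/- Common framework: operations, relations, clones, preservation,
   primitive positive definability, polymorphism-homogeneity. -/

namespace PaperPH

/-- `Op A n` is the set of `n`-ary operations on `A`. -/
abbrev Op (A : Type*) (n : ℕ) := (Fin n → A) → A

/-- A family of operations on `A`, sorted by arity. -/
abbrev OpFamily (A : Type*) := ∀ n : ℕ, Set (Op A n)

/-- A family of relations on `A`, sorted by arity. -/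
abbrev RelFamily (A : Type*) := ∀ n : ℕ, Set (Set (Fin n → A))

variable {A : Type*}

/-- The `k`-ary partial operation given by the total map `h` together with domain `D`
preserves the `n`-ary relation `ρ`: for every `n × k` matrix all of whose rows lie in `D`
and all of whose columns lie in `ρ`, applying `h` to the rows yields a tuple in `ρ`. -/
def pPreserves {k n : ℕ} (D : Set (Fin k → A)) (h : Op A k) (ρ : Set (Fin n → A)) : Prop :=
  ∀ M : Fin n → Fin k → A,
    (∀ i, M i ∈ D) → (∀ j, (fun i => M i j) ∈ ρ) → (fun i => h (M i)) ∈ ρ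

/-- `h` (with domain `D`) preserves every relation of the family `R`. -/
def pPreservesAll {k : ℕ} (D : Set (Fin k → A)) (h : Op A k) (R : RelFamily A) : Prop :=
  ∀ n, ∀ ρ ∈ R n, pPreserves D h ρ

/-- The relational structure `⟨A; R⟩` is polymorphism-homogeneous: for every `k ≥ 1`,
every partial operation preserving all relations of `R` extends to a total operation
preserving all relations of `R`. -/
def RelPolyHom (R : RelFamily A) : Prop :=
  ∀ k, 1 ≤ k → ∀ (D : Set (Fin k → A)) (h : Op A k), pPreservesAll D h R →
    ∃ g : Op A k, (∀ x ∈ D, g x = h x) ∧ pPreservesAll Set.univ g R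

/-- A family of operations is a clone if it contains all projections and is closed
under composition. -/
def IsClone (C : OpFamily A) : Prop :=
  (∀ (n : ℕ) (i : Fin n), (fun x => x i) ∈ C n) ∧
  (∀ (n k : ℕ) (f : Op A n) (g : Fin n → Op A k),
    f ∈ C n → (∀ i, g i ∈ C k) → (fun x => f (fun i => g i x)) ∈ C k)

/-- The clone generated by a family `F` of operations; for an algebra with basic
operations `F` this is its clone `Clo(A)` of term operations. -/
def CloGen (F : OpFamily A) : OpFamily A :=
  fun n => { f | ∀ C : OpFamily A, IsClone C → (∀ m, F m ⊆ C m) → f ∈ C n }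

/-- The graph `f•` of an `n`-ary operation `f`: the solution set of
`f(x_1,…,x_n) = x_{n+1}`. -/
def graphRel {n : ℕ} (f : Op A n) : Set (Fin (n + 1) → A) :=
  { a | f (fun i => a i.castSucc) = a (Fin.last n) }

/-- `C•`: the family of graphs of the operations in `C`. -/
def Cdot (C : OpFamily A) : RelFamily A := fun m =>
  match m with
  | 0 => ∅
  | n + 1 => { ρ | ∃ f ∈ C n, ρ = graphRel f }

/-- `C°`: the family of solution sets `Sol(f,g) = {a | f(a) = g(a)}` of equations
between members of `C` of the same arity. -/
def Ccirc (C : OpFamily A) : RelFamily A := fun n =>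
  { ρ | ∃ f ∈ C n, ∃ g ∈ C n, ρ = { a | f a = g a } }

/-- `Pol R`: all total operations preserving every relation in `R`. -/
def PolOps (R : RelFamily A) : OpFamily A := fun k =>
  { h | pPreservesAll Set.univ h R }

/-- `Inv F`: all relations preserved by every operation in `F`. -/
def InvRels (F : OpFamily A) : RelFamily A := fun n =>
  { ρ | ∀ k, 1 ≤ k → ∀ h ∈ F k, pPreserves (Set.univ : Set (Fin k → A)) h ρ }

/-- `⟨R⟩_∄`: the relations definable by quantifier-free primitive positive formulas
over `R`, i.e. by conjunctions of atomic formulas `τ_i(x_{σ_i(1)},…,x_{σ_i(r_i)})`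
with `τ_i ∈ R`. -/
def qfDef (R : RelFamily A) : RelFamily A := fun n =>
  { ρ | ∃ (t : ℕ) (r : Fin t → ℕ) (τ : ∀ i : Fin t, Set (Fin (r i) → A))
      (σ : ∀ i : Fin t, Fin (r i) → Fin n),
      (∀ i, τ i ∈ R (r i)) ∧
      ρ = { a | ∀ i, (fun j => a (σ i j)) ∈ τ i } }

/-- `⟨R⟩_∃`: the relations definable by primitive positive formulas over `R`
(existentially quantified conjunctions of atomic formulas over `R`). -/
def ppDef (R : RelFamily A) : RelFamily A := fun n =>
  { ρ | ∃ (m t : ℕ) (r : Fin t → ℕ) (τ : ∀ i : Fin t, Set (Fin (r i) → A))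
      (σ : ∀ i : Fin t, Fin (r i) → Fin (n + m)),
      (∀ i, τ i ∈ R (r i)) ∧
      ρ = { a | ∃ b : Fin m → A, ∀ i, (fun j => Fin.append a b (σ i j)) ∈ τ i } }

/-- `B ⊆ A^k` is closed under the componentwise action of the operations in `C`,
i.e. `B` is a subalgebra (possibly empty) of the `k`-th power. -/
def ClosedUnder (C : OpFamily A) (k : ℕ) (B : Set (Fin k → A)) : Prop :=
  ∀ n, ∀ f ∈ C n, ∀ M : Fin n → Fin k → A,
    (∀ i, M i ∈ B) → (fun j => f (fun i => M i j)) ∈ B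

/-- `h` is a homomorphism from the subalgebra `B ≤ A^k` to `A` (w.r.t. the
operations in `C`): it commutes with the componentwise action on tuples from `B`. -/
def IsHomOn (C : OpFamily A) {k : ℕ} (B : Set (Fin k → A)) (h : Op A k) : Prop :=
  ∀ n, ∀ f ∈ C n, ∀ M : Fin n → Fin k → A, (∀ i, M i ∈ B) →
    h (fun j => f (fun i => M i j)) = f (fun i => h (M i))

/-- The algebra with clone of term operations `C` is polymorphism-homogeneous:
for every `k ≥ 1`, every homomorphism from a subalgebra of `A^k` to `A` extends
to a homomorphism `A^k → A`. -/
def AlgPolyHom (C : OpFamily A) : Prop :=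
  ∀ k, 1 ≤ k → ∀ B : Set (Fin k → A), ClosedUnder C k B →
    ∀ h : Op A k, IsHomOn C B h →
      ∃ g : Op A k, (∀ x ∈ B, g x = h x) ∧ IsHomOn C Set.univ g

/-- The algebra with clone of term operations `C` is homomorphism-homogeneous:
every homomorphism from a subalgebra of `A` to `A` extends to an endomorphism of `A`. -/
def AlgHomHom (C : OpFamily A) : Prop :=
  ∀ B : Set (Fin 1 → A), ClosedUnder C 1 B →
    ∀ h : Op A 1, IsHomOn C B h →
      ∃ g : Op A 1, (∀ x ∈ B, g x = h x) ∧ IsHomOn C Set.univ g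

/-- Property (SDC): the algebraic sets (solution sets of systems of equations, i.e.
the quantifier-free pp definable relations over `C°`) are exactly the relations
closed under the centralizer `C* = Pol C•`. -/
def SDC (C : OpFamily A) : Prop :=
  ∀ n, 1 ≤ n → qfDef (Ccirc C) n = InvRels (PolOps (Cdot C)) n

/-- The subalgebra of `A^k` generated by `S` (w.r.t. the operations of `C`). -/
def Gen (C : OpFamily A) (k : ℕ) (S : Set (Fin k → A)) : Set (Fin k → A) :=
  ⋂₀ { B | ClosedUnder C k B ∧ S ⊆ B }

/-- The algebra with clone of term operations `C` is injective in `SP_fin(A)`,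
the class of subalgebras of finite direct powers of `A`: every homomorphism from
a subalgebra `B ≤ B' ≤ A^m` to `A` extends to a homomorphism `B' → A`. -/
def InjSPfin (C : OpFamily A) : Prop :=
  ∀ m, 1 ≤ m → ∀ B B' : Set (Fin m → A), ClosedUnder C m B → ClosedUnder C m B' → B ⊆ B' →
    ∀ h : Op A m, IsHomOn C B h →
      ∃ g : Op A m, (∀ x ∈ B, g x = h x) ∧ IsHomOn C B' g

end PaperPH

namespace PaperPHProof

open PaperPH

variable {A : Type*}

lemma zero_ary {k : ℕ} (hk : 1 ≤ k) (D : Set (Fin k → A)) (h : Op A k)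
    (ρ : Set (Fin 0 → A)) : pPreserves D h ρ := by
  intro M _ hcol
  have heq : (fun i : Fin 0 => h (M i)) = (fun i => M i ⟨0, hk⟩) := funext fun i => i.elim0
  rw [heq]
  exact hcol _

lemma cdot_subset_ccirc {C : OpFamily A} (hC : IsClone C) :
    ∀ n, Cdot C n ⊆ Ccirc C n := by
  intro n ρ hρ
  cases n with
  | zero => exact hρ.elim
  | succ m =>
    obtain ⟨f, hf, rfl⟩ := hρ
    exact ⟨fun x => f (fun i => x i.castSucc),
      hC.2 m (m+1) f _ hf (fun i => hC.1 _ _),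
      fun x => x (Fin.last m), hC.1 _ _, rfl⟩

lemma pres_qfDef {k n : ℕ} {D : Set (Fin k → A)} {h : Op A k} {R : RelFamily A}
    (hp : pPreservesAll D h R) {ρ : Set (Fin n → A)} (hρ : ρ ∈ qfDef R n) :
    pPreserves D h ρ := by
  obtain ⟨t, r, τ, σ, hτ, rfl⟩ := hρ
  intro M hM hcol i
  exact hp (r i) (τ i) (hτ i) (fun j => M (σ i j)) (fun j => hM _) (fun j => hcol j i)

lemma total_pres_sol {C : OpFamily A} {k n : ℕ} {gT : Op A k}
    (hgT : pPreservesAll Set.univ gT (Cdot C)) {f g : Op A n}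
    (hf : f ∈ C n) (hg : g ∈ C n) :
    pPreserves Set.univ gT {a | f a = g a} := by
  intro M _ hcol
  set b : Fin k → A := fun j' => f (fun i => M i j') with hb
  set N : Fin (n+1) → Fin k → A := Fin.snoc M b with hN
  have hcolf : ∀ j, (fun i => N i j) ∈ graphRel f := by
    intro j
    simp only [graphRel, Set.mem_setOf_eq, hN, Fin.snoc_castSucc, Fin.snoc_last, hb]
  have hcolg : ∀ j, (fun i => N i j) ∈ graphRel g := by
    intro j
    simp only [graphRel, Set.mem_setOf_eq, hN, Fin.snoc_castSucc, Fin.snoc_last, hb]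
    exact (hcol j).symm
  have h1 := hgT (n+1) (graphRel f) ⟨f, hf, rfl⟩ N (fun _ => Set.mem_univ _) hcolf
  have h2 := hgT (n+1) (graphRel g) ⟨g, hg, rfl⟩ N (fun _ => Set.mem_univ _) hcolg
  simp only [graphRel, Set.mem_setOf_eq, hN, Fin.snoc_castSucc, Fin.snoc_last] at h1 h2
  show f (fun i => gT (M i)) = g (fun i => gT (M i))
  rw [h1, h2]

lemma mem_qfDef_of_mem {R : RelFamily A} {n : ℕ} {ρ : Set (Fin n → A)}
    (hρ : ρ ∈ R n) : ρ ∈ qfDef R n := by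
  refine ⟨1, fun _ => n, fun _ => ρ, fun _ => id, fun _ => hρ, ?_⟩
  ext a
  exact ⟨fun ha _ => ha, fun ha => ha 0⟩

lemma qfDef_mono {R S : RelFamily A} (hsub : ∀ m, R m ⊆ S m) (n : ℕ) :
    qfDef R n ⊆ qfDef S n := by
  rintro ρ ⟨t, r, τ, σ, hτ, rfl⟩
  exact ⟨t, r, τ, σ, fun i => hsub _ (hτ i), rfl⟩

lemma flatten {R : RelFamily A} {n t : ℕ} {r : Fin t → ℕ}
    {τ : ∀ i, Set (Fin (r i) → A)} {σ : ∀ i, Fin (r i) → Fin n}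
    [Fintype A]
    (hτ : ∀ i, τ i ∈ qfDef R (r i)) :
    {a | ∀ i, (fun j => a (σ i j)) ∈ τ i} ∈ qfDef R n := by
  choose t' r' τ' σ' hτ' hset using hτ
  let T := (i : Fin t) × Fin (t' i)
  let e : Fin (Fintype.card T) ≃ T := (Fintype.equivFin T).symm
  refine ⟨Fintype.card T, fun j => r' (e j).1 (e j).2, fun j => τ' (e j).1 (e j).2,
    fun j q => σ (e j).1 (σ' (e j).1 (e j).2 q), fun j => hτ' _ _, ?_⟩
  ext a
  simp only [Set.mem_setOf_eq]
  constructor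
  · intro ha j
    have hi := ha (e j).1
    rw [hset] at hi
    exact hi (e j).2
  · intro ha i
    rw [hset]
    intro i'
    have hj := ha (e.symm ⟨i, i'⟩)
    have he : e (e.symm ⟨i, i'⟩) = ⟨i, i'⟩ := e.apply_symm_apply _
    beta_reduce at hj
    rw [he] at hj
    exact hj

lemma empty_mem_qfDef_cdot {C : OpFamily A} (hC : IsClone C) {n r : ℕ} (hn : 1 ≤ n)
    {f g : Op A r} (hf : f ∈ C r) (hg : g ∈ C r)
    (hfg : {a : Fin r → A | f a = g a} = ∅) :
    (∅ : Set (Fin n → A)) ∈ qfDef (Cdot C) n := by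
  refine ⟨2, fun _ => r + 1, ![graphRel f, graphRel g], fun _ _ => ⟨0, hn⟩, ?_, ?_⟩
  · intro i
    fin_cases i
    · exact ⟨f, hf, rfl⟩
    · exact ⟨g, hg, rfl⟩
  · ext a
    simp only [Set.mem_empty_iff_false, false_iff, Set.mem_setOf_eq]
    intro hall
    have h0 := hall 0
    have h1 := hall 1
    simp only [Matrix.cons_val_zero, Matrix.cons_val_one, Matrix.head_cons,
      graphRel, Set.mem_setOf_eq] at h0 h1
    have hmem : (fun _ : Fin r => a ⟨0, hn⟩) ∈ {x : Fin r → A | f x = g x} :=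
      h0.trans h1.symm
    rw [hfg] at hmem
    exact hmem

lemma P_mem_qfDef [Fintype A] {C : OpFamily A} {r : ℕ} (f g : Op A r) :
    {a : Fin r → A | ∀ (F : Op A r) (jj : Fin r), F ∈ C r →
      (∀ b, f b = g b → F b = b jj) → F a = a jj} ∈ qfDef (Cdot C) r := by
  classical
  let I := {q : Op A r × Fin r // q.1 ∈ C r ∧ ∀ b, f b = g b → q.1 b = b q.2}
  haveI : Fintype I := Fintype.ofFinite I
  let e : Fin (Fintype.card I) ≃ I := (Fintype.equivFin I).symm
  refine ⟨Fintype.card I, fun _ => r + 1, fun i => graphRel ((e i).1.1),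
    fun i => Fin.snoc (fun q => q) ((e i).1.2), fun i => ⟨(e i).1.1, (e i).2.1, rfl⟩, ?_⟩
  ext a
  simp only [Set.mem_setOf_eq]
  constructor
  · intro ha i
    simp only [graphRel, Set.mem_setOf_eq, Fin.snoc_castSucc, Fin.snoc_last]
    exact ha _ _ (e i).2.1 (e i).2.2
  · intro ha F jj hF hspec
    have hi := ha (e.symm ⟨(F, jj), hF, hspec⟩)
    have he : e (e.symm ⟨(F, jj), hF, hspec⟩) = ⟨(F, jj), hF, hspec⟩ :=
      e.apply_symm_apply _
    rw [he] at hi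
    simp only [graphRel, Set.mem_setOf_eq, Fin.snoc_castSucc, Fin.snoc_last] at hi
    exact hi

lemma geiger_core {C : OpFamily A} (hC : IsClone C) (hPH : RelPolyHom (Cdot C))
    {r : ℕ} (hr : 1 ≤ r) {f g : Op A r} (hf : f ∈ C r) (hg : g ∈ C r)
    {k : ℕ} (hk : 1 ≤ k) (col : Fin k → (Fin r → A))
    (hcol : ∀ j, f (col j) = g (col j))
    (hsurj : ∀ b, f b = g b → ∃ j, col j = b)
    (a : Fin r → A)
    (ha : ∀ (F : Op A r) (jj : Fin r), F ∈ C r →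
      (∀ b, f b = g b → F b = b jj) → F a = a jj) :
    f a = g a := by
  classical
  set D : Set (Fin k → A) := {d | ∃ i, (fun j => col j i) = d} with hD
  set h : Op A k := fun d =>
    if hd : ∃ i : Fin r, (fun j => col j i) = d then a hd.choose else a ⟨0, hr⟩ with hh
  have hwd : ∀ i i' : Fin r, (fun j => col j i) = (fun j => col j i') → a i = a i' := by
    intro i i' hrr
    refine ha (fun x => x i) i' (hC.1 r i) ?_
    intro b hb
    obtain ⟨j, hj⟩ := hsurj b hb
    show b i = b i'
    rw [← hj]
    exact congrFun hrr j
  have hval : ∀ i, h (fun j => col j i) = a i := by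
    intro i
    have hd : ∃ i', (fun j => col j i') = (fun j => col j i) := ⟨i, rfl⟩
    rw [hh]
    simp only [dif_pos hd]
    exact hwd _ _ hd.choose_spec
  have hpres : pPreservesAll D h (Cdot C) := by
    intro n' ρ'' hρ''
    cases n' with
    | zero => exact hρ''.elim
    | succ m =>
      obtain ⟨f', hf', rfl⟩ := hρ''
      intro M hM hcolM
      choose p hp using hM
      have hMval : ∀ i, h (M i) = a (p i) := by
        intro i
        rw [← hp i]
        exact hval (p i)
      have hFC : (fun x : Fin r → A => f' (fun q => x (p q.castSucc))) ∈ C r :=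
        hC.2 m r f' (fun q x => x (p q.castSucc)) hf' (fun q => hC.1 r (p q.castSucc))
      have hspec : ∀ b, f b = g b → f' (fun q => b (p q.castSucc)) = b (p (Fin.last m)) := by
        intro b hb
        obtain ⟨j, hj⟩ := hsurj b hb
        have hcj := hcolM j
        simp only [graphRel, Set.mem_setOf_eq] at hcj
        have hMc : ∀ i, M i j = col j (p i) := fun i => (congrFun (hp i) j).symm
        simp only [hMc] at hcj
        rw [← hj]
        exact hcj
      have hfin := ha _ _ hFC hspec
      show f' (fun q => h (M q.castSucc)) = h (M (Fin.last m))
      simp only [hMval]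
      exact hfin
  obtain ⟨gT, hagree, hgT⟩ := hPH k hk D h hpres
  have hpresρ := total_pres_sol hgT hf hg
  have hmem := hpresρ (fun i j => col j i) (fun _ => Set.mem_univ _)
    (fun j => hcol j)
  have hgTa : ∀ i, gT (fun j => col j i) = a i := by
    intro i
    rw [hagree _ ⟨i, rfl⟩]
    exact hval i
  have hfun : (fun i => gT (fun j => col j i)) = a := funext hgTa
  rw [Set.mem_setOf_eq, hfun] at hmem
  exact hmem

lemma sol_mem_qfDef [Fintype A] {C : OpFamily A} (hC : IsClone C)
    (hPH : RelPolyHom (Cdot C)) {r : ℕ} {f g : Op A r}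
    (hf : f ∈ C r) (hg : g ∈ C r) (hne : {a : Fin r → A | f a = g a}.Nonempty) :
    {a : Fin r → A | f a = g a} ∈ qfDef (Cdot C) r := by
  rcases Nat.eq_zero_or_pos r with hr | hr
  · subst hr
    have huniv : {a : Fin 0 → A | f a = g a} = Set.univ := by
      ext x
      simp only [Set.mem_setOf_eq, Set.mem_univ, iff_true]
      obtain ⟨a₀, ha₀⟩ := hne
      have hx : x = a₀ := funext fun i => i.elim0
      rw [hx]; exact ha₀
    rw [huniv]
    exact ⟨0, Fin.elim0, fun i => i.elim0, fun i => i.elim0, fun i => i.elim0,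
      by ext a; exact ⟨fun _ i => i.elim0, fun _ => trivial⟩⟩
  · haveI : Fintype ↥{a : Fin r → A | f a = g a} := Fintype.ofFinite _
    obtain ⟨a₀, ha₀⟩ := hne
    have hk : 1 ≤ Fintype.card ↥{a : Fin r → A | f a = g a} :=
      Fintype.card_pos_iff.mpr ⟨⟨a₀, ha₀⟩⟩
    set cE : Fin (Fintype.card ↥{a : Fin r → A | f a = g a}) ≃ ↥{a : Fin r → A | f a = g a} :=
      (Fintype.equivFin _).symm with hcE
    have heq : {a : Fin r → A | f a = g a} =
        {a : Fin r → A | ∀ (F : Op A r) (jj : Fin r), F ∈ C r →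
          (∀ b, f b = g b → F b = b jj) → F a = a jj} := by
      apply Set.Subset.antisymm
      · intro b hb F jj hF hspec
        exact hspec b hb
      · intro a ha
        refine geiger_core hC hPH hr hf hg hk (fun j => (cE j : Fin r → A)) ?_ ?_ a ha
        · exact fun j => (cE j).2
        · intro b hb
          exact ⟨cE.symm ⟨b, hb⟩, congrArg Subtype.val (cE.apply_symm_apply ⟨b, hb⟩)⟩
    rw [heq]
    exact P_mem_qfDef f g

end PaperPHProof

open PaperPH

/-- Let `A` be a finite algebra with clone of term operations `C`.
Then `⟨A;C•⟩` is polymorphism-homogeneous iff `⟨A;C°⟩` is polymorphism-homogeneous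
and `⟨C•⟩_∄ = ⟨C°⟩_∄`. -/
theorem relPolyHom_Cdot_iff (A : Type*) [Fintype A]
    (C : OpFamily A) (hC : IsClone C) :
    RelPolyHom (Cdot C) ↔
      (RelPolyHom (Ccirc C) ∧ ∀ n, 1 ≤ n → qfDef (Cdot C) n = qfDef (Ccirc C) n) := by
  constructor
  · intro hPH
    refine ⟨?_, ?_⟩
    · intro k hk D h hp
      have hp1 : pPreservesAll D h (Cdot C) := fun n ρ hρ =>
        hp n ρ (PaperPHProof.cdot_subset_ccirc hC n hρ)
      obtain ⟨gT, hag, hgT⟩ := hPH k hk D h hp1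
      refine ⟨gT, hag, ?_⟩
      intro n ρ hρ
      obtain ⟨f, hf, g, hg, rfl⟩ := hρ
      exact PaperPHProof.total_pres_sol hgT hf hg
    · intro n hn
      apply Set.Subset.antisymm
      · exact PaperPHProof.qfDef_mono (PaperPHProof.cdot_subset_ccirc hC) n
      · rintro ρ ⟨t, r, τ, σ, hτ, rfl⟩
        by_cases hcase : ∀ i, (τ i).Nonempty
        · apply PaperPHProof.flatten
          intro i
          obtain ⟨f, hf, g, hg, hτi⟩ := hτ i
          rw [hτi]
          refine PaperPHProof.sol_mem_qfDef hC hPH hf hg ?_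
          rw [← hτi]
          exact hcase i
        · push_neg at hcase
          obtain ⟨i₀, hi₀⟩ := hcase
          have hτ0 : τ i₀ = ∅ := hi₀
          have hρempty : {a : Fin n → A | ∀ i, (fun j => a (σ i j)) ∈ τ i} = ∅ := by
            apply Set.eq_empty_iff_forall_notMem.mpr
            intro a ha
            have := ha i₀
            rw [hτ0] at this
            exact this
          rw [hρempty]
          obtain ⟨f, hf, g, hg, hτi⟩ := hτ i₀
          exact PaperPHProof.empty_mem_qfDef_cdot hC hn hf hg (hτi.symm.trans hτ0)
  · rintro ⟨hPH2, heq⟩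
    intro k hk D h hp
    have hp2 : pPreservesAll D h (Ccirc C) := by
      intro n ρ hρ
      cases n with
      | zero => exact PaperPHProof.zero_ary hk D h ρ
      | succ m =>
        have hmem : ρ ∈ qfDef (Cdot C) (m+1) := by
          rw [heq (m+1) (Nat.succ_le_succ (Nat.zero_le m))]
          exact PaperPHProof.mem_qfDef_of_mem hρ
        exact PaperPHProof.pres_qfDef hp hmem
    obtain ⟨gT, hag, hgT⟩ := hPH2 k hk D h hp2
    exact ⟨gT, hag, fun n ρ hρ => hgT n ρ (PaperPHProof.cdot_subset_ccirc hC n hρ)⟩
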